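/- Let $k \in \mathbb{N}$, let $A, B \in \mathbb{R}^{k \times k}$ be symmetric positive definite matrices, and let $e : \mathbb{R} \to \mathbb{R}^k$ be a twice continuously differentiable function satisfying $e''(t) + A e'(t) + B e(t) = 0$ for all $t \geq 0$. Then $e(t) \to 0$ and $e'(t) \to 0$ as $t \to \infty$. -/

import Mathlib

open Matrix Filter

section Aux

lemma aux_dot_nonneg {k : ℕ} (x : Fin k → ℝ) : 0 ≤ x ⬝ᵥ x :=
  Finset.sum_nonneg fun j _ => mul_self_nonneg _

lemma aux_abs_le_sqrt_dot {k : ℕ} (x : Fin k → ℝ) (i : Fin k) :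
    |x i| ≤ Real.sqrt (x ⬝ᵥ x) := by
  rw [← Real.sqrt_sq_eq_abs]
  apply Real.sqrt_le_sqrt
  simp only [dotProduct]
  calc x i ^ 2 = x i * x i := sq (x i)
  _ ≤ ∑ j, x j * x j := Finset.single_le_sum (f := fun j => x j * x j)
      (fun _ _ => mul_self_nonneg _) (Finset.mem_univ i)

lemma aux_sqrt_dot_sq {k : ℕ} (x : Fin k → ℝ) :
    Real.sqrt (x ⬝ᵥ x) ^ 2 = x ⬝ᵥ x := Real.sq_sqrt (aux_dot_nonneg x)

lemma aux_abs_dot_le {k : ℕ} (x y : Fin k → ℝ) :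
    |x ⬝ᵥ y| ≤ Real.sqrt (x ⬝ᵥ x) * Real.sqrt (y ⬝ᵥ y) := by
  rw [← Real.sqrt_mul (aux_dot_nonneg x), ← Real.sqrt_sq_eq_abs]
  apply Real.sqrt_le_sqrt
  simpa [dotProduct, sq] using
    Finset.sum_mul_sq_le_sq_mul_sq Finset.univ x y

lemma aux_abs_dot_mulVec_le {k : ℕ} (M : Matrix (Fin k) (Fin k) ℝ) (x y : Fin k → ℝ) :
    |x ⬝ᵥ (M *ᵥ y)| ≤ (∑ i, ∑ j, |M i j|) * (Real.sqrt (x ⬝ᵥ x) * Real.sqrt (y ⬝ᵥ y)) := by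
  simp only [dotProduct, Matrix.mulVec]
  calc |∑ i, x i * ∑ j, M i j * y j| ≤ ∑ i, |x i * ∑ j, M i j * y j| :=
        Finset.abs_sum_le_sum_abs _ _
    _ ≤ ∑ i, ∑ j, |x i| * (|M i j| * |y j|) := by
        apply Finset.sum_le_sum; intro i _
        rw [abs_mul, ← Finset.mul_sum]
        gcongr
        calc |∑ j, M i j * y j| ≤ ∑ j, |M i j * y j| := Finset.abs_sum_le_sum_abs _ _
          _ = ∑ j, |M i j| * |y j| := by simp [abs_mul]
    _ ≤ ∑ i, ∑ j, Real.sqrt (x ⬝ᵥ x) * (|M i j| * Real.sqrt (y ⬝ᵥ y)) := by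
        apply Finset.sum_le_sum; intro i _
        apply Finset.sum_le_sum; intro j _
        have h1 := aux_abs_le_sqrt_dot x i
        have h2 := aux_abs_le_sqrt_dot y j
        gcongr
    _ = (∑ i, ∑ j, |M i j|) * (Real.sqrt (x ⬝ᵥ x) * Real.sqrt (y ⬝ᵥ y)) := by
        simp only [Finset.sum_mul, Finset.mul_sum]; congr 1; ext i; congr 1; ext j; ring

lemma aux_quad_smul {k : ℕ} (M : Matrix (Fin k) (Fin k) ℝ) (c : ℝ) (x : Fin k → ℝ) :
    (c • x) ⬝ᵥ (M *ᵥ (c • x)) = c ^ 2 * (x ⬝ᵥ (M *ᵥ x)) := by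
  rw [Matrix.mulVec_smul, smul_dotProduct, dotProduct_smul, smul_eq_mul, smul_eq_mul]; ring

lemma aux_pd_lower {k : ℕ} (hk : 0 < k) (M : Matrix (Fin k) (Fin k) ℝ)
    (hpd : ∀ x : Fin k → ℝ, x ≠ 0 → 0 < x ⬝ᵥ (M *ᵥ x)) :
    ∃ α > 0, ∀ x : Fin k → ℝ, α * (x ⬝ᵥ x) ≤ x ⬝ᵥ (M *ᵥ x) := by
  have hfc : Continuous fun x : Fin k → ℝ => x ⬝ᵥ (M *ᵥ x) := by
    simp only [dotProduct, Matrix.mulVec]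
    fun_prop
  have hgc : Continuous fun x : Fin k → ℝ => x ⬝ᵥ x := by
    simp only [dotProduct]; fun_prop
  set S : Set (Fin k → ℝ) := {x | x ⬝ᵥ x = 1} with hS
  have hScl : IsClosed S := isClosed_eq hgc continuous_const
  have hSbd : Bornology.IsBounded S := by
    rw [Metric.isBounded_iff_subset_closedBall 0]
    refine ⟨1, fun x hx => ?_⟩
    simp only [Metric.mem_closedBall, dist_zero_right]
    rw [pi_norm_le_iff_of_nonneg zero_le_one]
    intro i
    calc ‖x i‖ ≤ Real.sqrt (x ⬝ᵥ x) := aux_abs_le_sqrt_dot x i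
      _ = 1 := by rw [hx]; exact Real.sqrt_one
  have hScp : IsCompact S := Metric.isCompact_of_isClosed_isBounded hScl hSbd
  have hSne : S.Nonempty := by
    refine ⟨Pi.single ⟨0, hk⟩ 1, ?_⟩
    simp only [hS, Set.mem_setOf_eq, dotProduct]
    rw [Finset.sum_eq_single ⟨0, hk⟩]
    · simp
    · intro j _ hj; simp [Pi.single_apply, hj]
    · simp
  obtain ⟨z, hzS, hz'⟩ := hScp.exists_isMinOn hSne hfc.continuousOn
  have hz : ∀ y ∈ S, z ⬝ᵥ (M *ᵥ z) ≤ y ⬝ᵥ (M *ᵥ y) := fun y hy => hz' hy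
  have hzne : z ≠ 0 := by
    intro h; rw [hS] at hzS; simp only [Set.mem_setOf_eq, h] at hzS; simp at hzS
  refine ⟨z ⬝ᵥ (M *ᵥ z), hpd z hzne, fun x => ?_⟩
  rcases eq_or_ne x 0 with rfl | hx
  · simp
  · have hq : 0 < x ⬝ᵥ x := by
      rcases (aux_dot_nonneg x).lt_or_eq with h | h
      · exact h
      · exfalso; apply hx; funext i
        have := aux_abs_le_sqrt_dot x i
        rw [← h, Real.sqrt_zero] at this
        have h0 : |x i| = 0 := le_antisymm this (abs_nonneg _)
        simpa using abs_eq_zero.mp h0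
    set r := Real.sqrt (x ⬝ᵥ x) with hr
    have hrpos : 0 < r := Real.sqrt_pos.mpr hq
    have hr2 : r ^ 2 = x ⬝ᵥ x := Real.sq_sqrt hq.le
    have hyS : (r⁻¹ • x) ∈ S := by
      simp only [hS, Set.mem_setOf_eq]
      rw [smul_dotProduct, dotProduct_smul, smul_eq_mul, smul_eq_mul, ← hr2]
      rw [sq]
      field_simp
    have := hz _ hyS
    have hscale : (r⁻¹ • x) ⬝ᵥ (M *ᵥ (r⁻¹ • x)) = r⁻¹ ^ 2 * (x ⬝ᵥ (M *ᵥ x)) :=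
      aux_quad_smul M r⁻¹ x
    rw [hscale] at this
    have h2 : (z ⬝ᵥ (M *ᵥ z)) * r ^ 2 ≤ x ⬝ᵥ (M *ᵥ x) := by
      calc (z ⬝ᵥ (M *ᵥ z)) * r ^ 2 ≤ (r⁻¹ ^ 2 * (x ⬝ᵥ (M *ᵥ x))) * r ^ 2 := by
            nlinarith [sq_nonneg r]
        _ = x ⬝ᵥ (M *ᵥ x) := by field_simp
    rw [← hr2]; linarith

lemma aux_hasDerivAt_mulVec {k : ℕ} (M : Matrix (Fin k) (Fin k) ℝ)
    {v : ℝ → Fin k → ℝ} {v' : Fin k → ℝ} {t : ℝ}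
    (h : HasDerivAt v v' t) : HasDerivAt (fun s => M *ᵥ v s) (M *ᵥ v') t := by
  rw [hasDerivAt_pi] at h ⊢
  intro i
  simp only [Matrix.mulVec, dotProduct]
  exact HasDerivAt.fun_sum fun j _ => (h j).const_mul (M i j)

lemma aux_hasDerivAt_dot {k : ℕ} {u v : ℝ → Fin k → ℝ} {u' v' : Fin k → ℝ} {t : ℝ}
    (hu : HasDerivAt u u' t) (hv : HasDerivAt v v' t) :
    HasDerivAt (fun s => u s ⬝ᵥ v s) (u' ⬝ᵥ v t + u t ⬝ᵥ v') t := by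
  rw [hasDerivAt_pi] at hu hv
  simp only [dotProduct, ← Finset.sum_add_distrib]
  exact HasDerivAt.fun_sum fun j _ => ((hu j).mul (hv j))

lemma aux_symm_dot {k : ℕ} {M : Matrix (Fin k) (Fin k) ℝ} (h : M.IsSymm)
    (x y : Fin k → ℝ) : x ⬝ᵥ (M *ᵥ y) = y ⬝ᵥ (M *ᵥ x) := by
  rw [Matrix.dotProduct_mulVec, ← Matrix.vecMul_transpose, h.eq, dotProduct_comm]

end Aux

set_option maxHeartbeats 2000000 in
/-- If `A, B` are symmetric positive definite `k × k` real matrices and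
`e : ℝ → ℝ^k` is twice continuously differentiable with
`e'' + A e' + B e = 0` on `[0, ∞)`, then `e(t) → 0` and `e'(t) → 0` as `t → ∞`. -/
theorem stmt_0 (k : ℕ) (A B : Matrix (Fin k) (Fin k) ℝ)
    (hAsymm : A.IsSymm) (hBsymm : B.IsSymm)
    (hApd : ∀ x : Fin k → ℝ, x ≠ 0 → 0 < x ⬝ᵥ A.mulVec x)
    (hBpd : ∀ x : Fin k → ℝ, x ≠ 0 → 0 < x ⬝ᵥ B.mulVec x)
    (e : ℝ → (Fin k → ℝ)) (he : ContDiff ℝ 2 e)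
    (hode : ∀ t : ℝ, 0 ≤ t →
      deriv (deriv e) t + A.mulVec (deriv e t) + B.mulVec (e t) = 0) :
    Tendsto e atTop (nhds 0) ∧ Tendsto (deriv e) atTop (nhds 0) := by
  rcases Nat.eq_zero_or_pos k with hk0 | hk
  · subst hk0
    constructor <;>
    · refine tendsto_const_nhds.congr fun t => ?_
      exact Subsingleton.elim _ _
  -- constants
  obtain ⟨α, hα, hAlow⟩ := aux_pd_lower hk A hApd
  obtain ⟨β, hβ, hBlow⟩ := aux_pd_lower hk B hBpd
  set MA : ℝ := ∑ i, ∑ j, |A i j| with hMAdef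
  set MB : ℝ := ∑ i, ∑ j, |B i j| with hMBdef
  have hMA : 0 ≤ MA := Finset.sum_nonneg fun i _ => Finset.sum_nonneg fun j _ => abs_nonneg _
  have hMB : 0 ≤ MB := Finset.sum_nonneg fun i _ => Finset.sum_nonneg fun j _ => abs_nonneg _
  have hden : (0:ℝ) < 1 + MA ^ 2 / (2 * β) := by positivity
  set ε : ℝ := min (min 1 β) (α / (1 + MA ^ 2 / (2 * β))) with hεdef
  have hεpos : 0 < ε := lt_min (lt_min one_pos hβ) (by positivity)
  have hε1 : ε ≤ 1 := le_trans (min_le_left _ _) (min_le_left _ _)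
  have hεβ : ε ≤ β := le_trans (min_le_left _ _) (min_le_right _ _)
  have hεα : ε * (1 + MA ^ 2 / (2 * β)) ≤ α := by
    have h := min_le_right (min 1 β) (α / (1 + MA ^ 2 / (2 * β)))
    rw [← hεdef] at h
    calc ε * (1 + MA ^ 2 / (2 * β)) ≤ (α / (1 + MA ^ 2 / (2 * β))) * (1 + MA ^ 2 / (2 * β)) := by
          gcongr
      _ = α := by field_simp
  -- differentiability structure
  have hd1 : Differentiable ℝ e := he.differentiable (by norm_num)
  have h21 : ContDiff ℝ 1 (deriv e) := by
    have h2 : ContDiff ℝ ((1 : ℕ) + 1) e := by exact_mod_cast he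
    exact (contDiff_succ_iff_deriv.mp h2).2.2
  set e1 : ℝ → Fin k → ℝ := deriv e with he1def
  have hd2 : Differentiable ℝ e1 := h21.differentiable (by norm_num)
  set e2 : ℝ → Fin k → ℝ := deriv e1 with he2def
  have hE : ∀ t, HasDerivAt e (e1 t) t := fun t => (hd1 t).hasDerivAt
  have hE1 : ∀ t, HasDerivAt e1 (e2 t) t := fun t => (hd2 t).hasDerivAt
  have hode' : ∀ t : ℝ, 0 ≤ t → e2 t = -(A *ᵥ e1 t) - (B *ᵥ e t) := by
    intro t ht
    have h := hode t ht
    have : e2 t + (A *ᵥ e1 t + B *ᵥ e t) = 0 := by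
      rw [← add_assoc]; exact h
    have h2 := add_eq_zero_iff_eq_neg.mp this
    rw [h2]; abel
  -- scalar functions
  set p : ℝ → ℝ := fun t => e1 t ⬝ᵥ e1 t with hpdef
  set q : ℝ → ℝ := fun t => e t ⬝ᵥ e t with hqdef
  have hp0 : ∀ t, 0 ≤ p t := fun t => aux_dot_nonneg _
  have hq0 : ∀ t, 0 ≤ q t := fun t => aux_dot_nonneg _
  set V : ℝ → ℝ := fun t => p t + (e t ⬝ᵥ (B *ᵥ e t)) + ε * (e t ⬝ᵥ e1 t) with hVdef
  set Vd : ℝ → ℝ := fun t =>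
    (e2 t ⬝ᵥ e1 t + e1 t ⬝ᵥ e2 t) + (e1 t ⬝ᵥ (B *ᵥ e t) + e t ⬝ᵥ (B *ᵥ e1 t))
      + ε * (e1 t ⬝ᵥ e1 t + e t ⬝ᵥ e2 t) with hVddef
  have hV : ∀ t, HasDerivAt V (Vd t) t := by
    intro t
    have h1 := aux_hasDerivAt_dot (hE1 t) (hE1 t)
    have h2 := aux_hasDerivAt_dot (hE t) (aux_hasDerivAt_mulVec B (hE t))
    have h3 := (aux_hasDerivAt_dot (hE t) (hE1 t)).const_mul ε
    exact (h1.add h2).add h3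
  -- key inequality
  set c0 : ℝ := min α (ε * β / 2) with hc0def
  have hc0 : 0 < c0 := lt_min hα (by positivity)
  have hkey : ∀ t : ℝ, 0 ≤ t → Vd t ≤ -c0 * (p t + q t) := by
    intro t ht
    have hw := hode' t ht
    set u := e t
    set v := e1 t
    set a : ℝ := v ⬝ᵥ (A *ᵥ v) with hadef
    set b : ℝ := u ⬝ᵥ (B *ᵥ u) with hbdef
    set cr : ℝ := u ⬝ᵥ (A *ᵥ v) with hcrdef
    set pp : ℝ := v ⬝ᵥ v with hppdef
    set qq : ℝ := u ⬝ᵥ u with hqqdef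
    have ha : α * pp ≤ a := hAlow v
    have hb : β * qq ≤ b := hBlow u
    have hcross : |cr| ≤ MA * (Real.sqrt qq * Real.sqrt pp) :=
      aux_abs_dot_mulVec_le A u v
    set su := Real.sqrt qq with hsu
    set sv := Real.sqrt pp with hsv
    have hsu0 : 0 ≤ su := Real.sqrt_nonneg _
    have hsv0 : 0 ≤ sv := Real.sqrt_nonneg _
    have hsu2 : su ^ 2 = qq := aux_sqrt_dot_sq u
    have hsv2 : sv ^ 2 = pp := aux_sqrt_dot_sq v
    have hpp0 : 0 ≤ pp := aux_dot_nonneg v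
    have hqq0 : 0 ≤ qq := aux_dot_nonneg u
    -- compute Vd
    have hVdeq : Vd t = -2 * a + ε * pp - ε * cr - ε * b := by
      have hsB : u ⬝ᵥ (B *ᵥ v) = v ⬝ᵥ (B *ᵥ u) := aux_symm_dot hBsymm u v
      have hvw : v ⬝ᵥ e2 t = -a - (v ⬝ᵥ (B *ᵥ u)) := by
        rw [hw, dotProduct_sub, dotProduct_neg, hadef]
      have hwv : e2 t ⬝ᵥ v = -a - (v ⬝ᵥ (B *ᵥ u)) := by
        rw [dotProduct_comm]; exact hvw
      have huw : u ⬝ᵥ e2 t = -cr - b := by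
        rw [hw, dotProduct_sub, dotProduct_neg, hcrdef, hbdef]
      simp only [hVddef]
      rw [hvw, hwv, huw, hsB, ← hppdef]
      ring
    rw [hVdeq]
    -- Young's inequality for the cross term
    have hpt : p t = pp := rfl
    have hqt : q t = qq := rfl
    rw [hpt, hqt]
    have h1 : -(MA * (su * sv)) ≤ cr := neg_le_of_abs_le hcross
    have h2 : MA * (su * sv) ≤ (β / 2) * qq + (MA ^ 2 / (2 * β)) * pp := by
      have h3 : 2 * β * (MA * (su * sv)) ≤ β ^ 2 * su ^ 2 + MA ^ 2 * sv ^ 2 := by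
        nlinarith [sq_nonneg (β * su - MA * sv)]
      rw [← hsu2, ← hsv2]
      rw [show (β / 2) * su ^ 2 + (MA ^ 2 / (2 * β)) * sv ^ 2
          = (β ^ 2 * su ^ 2 + MA ^ 2 * sv ^ 2) / (2 * β) by field_simp]
      rw [le_div_iff₀ (by positivity : (0:ℝ) < 2 * β)]
      linarith
    have h4 : -(ε * ((β / 2) * qq + (MA ^ 2 / (2 * β)) * pp)) ≤ ε * cr := by
      have := mul_le_mul_of_nonneg_left (h1.trans' (neg_le_neg h2)) hεpos.le
      calc -(ε * ((β / 2) * qq + (MA ^ 2 / (2 * β)) * pp))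
          = ε * (-((β / 2) * qq + (MA ^ 2 / (2 * β)) * pp)) := by ring
        _ ≤ ε * cr := this
      -- note: this : ε * -(...) ≤ ε * cr
    have h4' : -(ε * cr) ≤ ε * (β / 2) * qq + ε * (MA ^ 2 / (2 * β)) * pp := by
      nlinarith [h4]
    have hbe : ε * (β * qq) ≤ ε * b := mul_le_mul_of_nonneg_left hb hεpos.le
    have h3 : ε * pp + ε * (MA ^ 2 / (2 * β)) * pp ≤ α * pp := by
      have h5 : ε * (1 + MA ^ 2 / (2 * β)) * pp ≤ α * pp :=
        mul_le_mul_of_nonneg_right hεα hpp0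
      nlinarith [h5]
    have hfinal : -2 * a + ε * pp - ε * cr - ε * b
        ≤ -α * pp - (ε * β / 2) * qq := by
      nlinarith [h4', hbe, h3, ha]
    have hcα : c0 ≤ α := min_le_left _ _
    have hcβ : c0 ≤ ε * β / 2 := min_le_right _ _
    nlinarith [hfinal, hpp0, hqq0]
  -- bounds on V
  set δ : ℝ := min 1 β / 2 with hδdef
  have hδ : 0 < δ := by positivity
  have hVlow : ∀ t, δ * (p t + q t) ≤ V t := by
    intro t
    have hcs : |e t ⬝ᵥ e1 t| ≤ Real.sqrt (q t) * Real.sqrt (p t) := aux_abs_dot_le _ _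
    have hsq : Real.sqrt (q t) ^ 2 = q t := aux_sqrt_dot_sq _
    have hsp : Real.sqrt (p t) ^ 2 = p t := aux_sqrt_dot_sq _
    have hamgm : Real.sqrt (q t) * Real.sqrt (p t) ≤ (q t + p t) / 2 := by
      nlinarith [sq_nonneg (Real.sqrt (q t) - Real.sqrt (p t))]
    have h1 : -(q t + p t) / 2 ≤ e t ⬝ᵥ e1 t := by
      have := neg_le_of_abs_le hcs; linarith
    have hb : β * q t ≤ e t ⬝ᵥ (B *ᵥ e t) := hBlow _
    have hδ1 : δ ≤ 1 / 2 := by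
      rw [hδdef]; have : min 1 β ≤ 1 := min_le_left _ _; linarith
    have hδβ : δ ≤ β / 2 := by
      rw [hδdef]; have : min 1 β ≤ β := min_le_right _ _; linarith
    simp only [hVdef]
    nlinarith [hp0 t, hq0 t, hεpos.le, mul_le_mul_of_nonneg_left h1 hεpos.le]
  set C : ℝ := MB + 2 with hCdef
  have hC : 0 < C := by positivity
  have hVup : ∀ t, V t ≤ C * (p t + q t) := by
    intro t
    have hcs : |e t ⬝ᵥ e1 t| ≤ Real.sqrt (q t) * Real.sqrt (p t) := aux_abs_dot_le _ _
    have hsq : Real.sqrt (q t) ^ 2 = q t := aux_sqrt_dot_sq _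
    have hsp : Real.sqrt (p t) ^ 2 = p t := aux_sqrt_dot_sq _
    have hamgm : Real.sqrt (q t) * Real.sqrt (p t) ≤ (q t + p t) / 2 := by
      nlinarith [sq_nonneg (Real.sqrt (q t) - Real.sqrt (p t))]
    have h1 : e t ⬝ᵥ e1 t ≤ (q t + p t) / 2 := le_trans (le_abs_self _) (le_trans hcs hamgm)
    have hBup : e t ⬝ᵥ (B *ᵥ e t) ≤ MB * q t := by
      have h := aux_abs_dot_mulVec_le B (e t) (e t)
      have h2 : Real.sqrt (e t ⬝ᵥ e t) * Real.sqrt (e t ⬝ᵥ e t) = q t := by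
        rw [← sq]; exact aux_sqrt_dot_sq _
      calc e t ⬝ᵥ (B *ᵥ e t) ≤ |e t ⬝ᵥ (B *ᵥ e t)| := le_abs_self _
        _ ≤ MB * (Real.sqrt (e t ⬝ᵥ e t) * Real.sqrt (e t ⬝ᵥ e t)) := h
        _ = MB * q t := by rw [h2]
    simp only [hVdef, hCdef]
    nlinarith [hp0 t, hq0 t, hεpos.le, mul_le_mul_of_nonneg_left h1 hεpos.le]
  have hV0 : ∀ t, 0 ≤ V t := fun t =>
    le_trans (by positivity) (le_trans (by nlinarith [hp0 t, hq0 t, hδ.le] : (0:ℝ) ≤ δ * (p t + q t)) (hVlow t))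
  -- exponential decay
  set c : ℝ := c0 / C with hcdef
  have hc : 0 < c := by positivity
  set W : ℝ → ℝ := fun t => V t * Real.exp (c * t) with hWdef
  have hWderiv : ∀ t, HasDerivAt W (Vd t * Real.exp (c * t) + V t * (Real.exp (c * t) * c)) t := by
    intro t
    have hexp : HasDerivAt (fun s => Real.exp (c * s)) (Real.exp (c * t) * c) t := by
      have h1 : HasDerivAt (fun s : ℝ => c * s) c t := by
        simpa using (hasDerivAt_id t).const_mul c
      exact h1.exp
    exact (hV t).mul hexp
  have hWanti : AntitoneOn W (Set.Ici 0) := by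
    apply antitoneOn_of_deriv_nonpos (convex_Ici 0)
    · exact fun t _ => ((hWderiv t).continuousAt).continuousWithinAt
    · intro t _
      exact ((hWderiv t).differentiableAt).differentiableWithinAt
    · intro t ht
      rw [interior_Ici] at ht
      rw [(hWderiv t).deriv]
      have ht0 : (0:ℝ) ≤ t := le_of_lt ht
      have hkt := hkey t ht0
      have hEpos : 0 < Real.exp (c * t) := Real.exp_pos _
      have hcV : c * V t ≤ c0 * (p t + q t) := by
        calc c * V t ≤ c * (C * (p t + q t)) :=
              mul_le_mul_of_nonneg_left (hVup t) hc.le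
          _ = c0 * (p t + q t) := by rw [hcdef]; field_simp
      nlinarith [hp0 t, hq0 t]
  have hWle : ∀ t : ℝ, 0 ≤ t → W t ≤ W 0 := fun t ht =>
    hWanti (Set.self_mem_Ici) (Set.mem_Ici.mpr ht) ht
  have hVle : ∀ t : ℝ, 0 ≤ t → V t ≤ V 0 * Real.exp (-(c * t)) := by
    intro t ht
    have h := hWle t ht
    simp only [hWdef] at h
    rw [mul_zero, Real.exp_zero, mul_one] at h
    rw [Real.exp_neg]
    have hEpos : 0 < Real.exp (c * t) := Real.exp_pos _
    calc V t = V t * Real.exp (c * t) * (Real.exp (c * t))⁻¹ := by field_simp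
      _ ≤ V 0 * (Real.exp (c * t))⁻¹ :=
          mul_le_mul_of_nonneg_right h (by positivity)
  -- conclude convergence of p + q
  have hpq : ∀ t : ℝ, 0 ≤ t → p t + q t ≤ (V 0 / δ) * Real.exp (-(c * t)) := by
    intro t ht
    have h1 := hVlow t
    have h2 := hVle t ht
    have hEpos : 0 < Real.exp (-(c * t)) := Real.exp_pos _
    rw [div_mul_eq_mul_div, le_div_iff₀ hδ]
    calc (p t + q t) * δ = δ * (p t + q t) := by ring
      _ ≤ V t := h1
      _ ≤ V 0 * Real.exp (-(c * t)) := h2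
  have hexp0 : Tendsto (fun t : ℝ => (V 0 / δ) * Real.exp (-(c * t))) atTop (nhds 0) := by
    have h1 : Tendsto (fun t : ℝ => c * t) atTop atTop :=
      Tendsto.const_mul_atTop hc tendsto_id
    have h2 : Tendsto (fun t : ℝ => Real.exp (-(c * t))) atTop (nhds 0) :=
      Real.tendsto_exp_neg_atTop_nhds_zero.comp h1
    simpa using h2.const_mul (V 0 / δ)
  have hpqz : Tendsto (fun t => p t + q t) atTop (nhds 0) := by
    apply tendsto_of_tendsto_of_tendsto_of_le_of_le' tendsto_const_nhds hexp0
    · filter_upwards [eventually_ge_atTop (0:ℝ)] with t ht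
      exact add_nonneg (hp0 t) (hq0 t)
    · filter_upwards [eventually_ge_atTop (0:ℝ)] with t ht
      exact hpq t ht
  have hpz : Tendsto p atTop (nhds 0) := by
    apply tendsto_of_tendsto_of_tendsto_of_le_of_le' tendsto_const_nhds hpqz
    · exact Eventually.of_forall hp0
    · exact Eventually.of_forall fun t => le_add_of_nonneg_right (hq0 t)
  have hqz : Tendsto q atTop (nhds 0) := by
    apply tendsto_of_tendsto_of_tendsto_of_le_of_le' tendsto_const_nhds hpqz
    · exact Eventually.of_forall hq0
    · exact Eventually.of_forall fun t => le_add_of_nonneg_left (hp0 t)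
  -- conclude coordinatewise convergence
  have key : ∀ (f : ℝ → Fin k → ℝ), Tendsto (fun t => f t ⬝ᵥ f t) atTop (nhds 0) →
      Tendsto f atTop (nhds 0) := by
    intro f hf
    rw [tendsto_pi_nhds]
    intro i
    have hsqrt : Tendsto (fun t => Real.sqrt (f t ⬝ᵥ f t)) atTop (nhds 0) := by
      have := (Real.continuous_sqrt.tendsto 0).comp hf
      simpa [Function.comp_def] using this
    rw [show (0 : Fin k → ℝ) i = 0 from rfl]
    rw [tendsto_zero_iff_abs_tendsto_zero]
    apply tendsto_of_tendsto_of_tendsto_of_le_of_le' tendsto_const_nhds hsqrt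
    · exact Eventually.of_forall fun t => abs_nonneg _
    · exact Eventually.of_forall fun t => aux_abs_le_sqrt_dot (f t) i
  exact ⟨key e hqz, key e1 hpz⟩
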